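/- Let M ∈ ℝ^{3×3} be symmetric, let k₁, γ > 0, and let R̃, R̂ : ℝ → ℝ^{3×3} and b̃ : ℝ → ℝ³ be differentiable with R̃(t), R̂(t) ∈ SO(3) for all t, satisfying Ṙ̃ = −[k₁·Υ(R̃M) − R̂ᵀ b̃]× R̃ and ḃ̃ = −γ·R̂·Υ(R̃M). Then the function C(t) = (1/2)·Tr((I₃ − R̃(t))M) + (1/(2γ))·‖b̃(t)‖² satisfies Ċ(t) = −k₁·‖Υ(R̃(t)M)‖² for all t; in particular C is nonincreasing. -/

import Mathlib

open Matrix Filter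

noncomputable section

/-- Skew-symmetric matrix of a vector: `skew ω *ᵥ v = ω ×₃ v`. -/
def skew (ω : Fin 3 → ℝ) : Matrix (Fin 3) (Fin 3) ℝ :=
  !![0, -ω 2, ω 1; ω 2, 0, -ω 0; -ω 1, ω 0, 0]

/-- Inverse of `skew` on skew-symmetric matrices. -/
def vex (M : Matrix (Fin 3) (Fin 3) ℝ) : Fin 3 → ℝ :=
  ![M 2 1, M 0 2, M 1 0]

/-- Anti-symmetric projection `P_a(M) = (M - Mᵀ)/2`. -/
def Pa (M : Matrix (Fin 3) (Fin 3) ℝ) : Matrix (Fin 3) (Fin 3) ℝ :=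
  (1 / 2 : ℝ) • (M - Mᵀ)

/-- `Υ(M) = vex (P_a M)`. -/
def Upsilon (M : Matrix (Fin 3) (Fin 3) ℝ) : Fin 3 → ℝ := vex (Pa M)

/-- `R ∈ SO(3)`. -/
def SO3 (R : Matrix (Fin 3) (Fin 3) ℝ) : Prop :=
  R * Rᵀ = 1 ∧ Rᵀ * R = 1 ∧ R.det = 1

/-- `‖R‖_I = Tr(I₃ - R)/4`. -/
def normI (R : Matrix (Fin 3) (Fin 3) ℝ) : ℝ := Matrix.trace (1 - R) / 4

/-- Squared Euclidean norm of a vector of `ℝ³`. -/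
def sqnorm (v : Fin 3 → ℝ) : ℝ := ∑ i, v i ^ 2

/-- Entrywise derivative of a matrix-valued function. -/
def HasMatDerivAt (R : ℝ → Matrix (Fin 3) (Fin 3) ℝ)
    (R' : Matrix (Fin 3) (Fin 3) ℝ) (t : ℝ) : Prop :=
  ∀ i j, HasDerivAt (fun s => R s i j) (R' i j) t

theorem lyapunov_decrease (M : Matrix (Fin 3) (Fin 3) ℝ) (hMsym : M.IsSymm)
    (k1 γ : ℝ) (hk1 : 0 < k1) (hγ : 0 < γ)
    (Rt Rhat : ℝ → Matrix (Fin 3) (Fin 3) ℝ) (btilde : ℝ → Fin 3 → ℝ)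
    (hSO : ∀ t, SO3 (Rt t)) (hSOhat : ∀ t, SO3 (Rhat t))
    (hRhatDiff : ∀ i j, Differentiable ℝ fun t => Rhat t i j)
    (hRt : ∀ t, HasMatDerivAt Rt
      (-(skew (k1 • Upsilon (Rt t * M) - (Rhat t)ᵀ *ᵥ btilde t) * Rt t)) t)
    (hb : ∀ t, HasDerivAt btilde (-(γ • (Rhat t *ᵥ Upsilon (Rt t * M)))) t) :
    (∀ t, HasDerivAt
      (fun s => Matrix.trace ((1 - Rt s) * M) / 2 + 1 / (2 * γ) * sqnorm (btilde s))
      (-(k1 * sqnorm (Upsilon (Rt t * M)))) t) ∧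
    Antitone (fun t => Matrix.trace ((1 - Rt t) * M) / 2 + 1 / (2 * γ) * sqnorm (btilde t)) := by
  have key : ∀ t, HasDerivAt
      (fun s => Matrix.trace ((1 - Rt s) * M) / 2 + 1 / (2 * γ) * sqnorm (btilde s))
      (-(k1 * sqnorm (Upsilon (Rt t * M)))) t := by
    intro t
    set ω := k1 • Upsilon (Rt t * M) - (Rhat t)ᵀ *ᵥ btilde t with hω
    set R' := -(skew ω * Rt t) with hR'
    set b' := -(γ • (Rhat t *ᵥ Upsilon (Rt t * M))) with hb'
    have hR : ∀ i j, HasDerivAt (fun s => Rt s i j) (R' i j) t := hRt t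
    have hbi : ∀ i, HasDerivAt (fun s => btilde s i) (b' i) t :=
      hasDerivAt_pi.1 (hb t)
    have h1 : HasDerivAt (fun s => ∑ i, ∑ j, Rt s i j * M j i)
        (∑ i, ∑ j, R' i j * M j i) t :=
      HasDerivAt.fun_sum fun i _ => HasDerivAt.fun_sum fun j _ => (hR i j).mul_const _
    have h2 : HasDerivAt (fun s => ∑ i, btilde s i ^ 2)
        (∑ i, (2 : ℕ) * btilde t i ^ 1 * b' i) t :=
      HasDerivAt.fun_sum fun i _ => (hbi i).fun_pow 2
    have h3 : HasDerivAt
        (fun s => (Matrix.trace M - ∑ i, ∑ j, Rt s i j * M j i) / 2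
          + 1 / (2 * γ) * ∑ i, btilde s i ^ 2)
        ((0 - ∑ i, ∑ j, R' i j * M j i) / 2
          + 1 / (2 * γ) * ∑ i, (2 : ℕ) * btilde t i ^ 1 * b' i) t :=
      (((hasDerivAt_const t (Matrix.trace M)).sub h1).div_const 2).add (h2.const_mul _)
    have heq : (fun s => Matrix.trace ((1 - Rt s) * M) / 2 + 1 / (2 * γ) * sqnorm (btilde s))
        = (fun s => (Matrix.trace M - ∑ i, ∑ j, Rt s i j * M j i) / 2
          + 1 / (2 * γ) * ∑ i, btilde s i ^ 2) := by
      funext s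
      simp only [sqnorm, Matrix.trace, Matrix.diag, Matrix.mul_apply, Matrix.sub_apply,
        Matrix.one_apply, Fin.sum_univ_three]
      norm_num [Fin.ext_iff]
      ring
    rw [heq]
    convert h3 using 1
    simp only [hR', hb', hω, Upsilon, vex, Pa, skew, sqnorm, Matrix.mul_apply,
      Matrix.mulVec, dotProduct, Matrix.neg_apply, Pi.neg_apply, Pi.smul_apply,
      Pi.sub_apply, Matrix.smul_apply, Matrix.sub_apply, Matrix.transpose_apply,
      smul_eq_mul, Fin.sum_univ_three]
    simp only [Matrix.cons_val', Matrix.cons_val_zero, Matrix.cons_val_one, Matrix.head_cons,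
      Matrix.head_fin_const, Matrix.cons_val_two, Matrix.tail_cons, Matrix.empty_val',
      Matrix.cons_val_fin_one, Matrix.of_apply]
    have hγ' : γ ≠ 0 := ne_of_gt hγ
    field_simp
    ring
  refine ⟨key, ?_⟩
  apply antitone_of_deriv_nonpos
  · intro t; exact ((key t).differentiableAt)
  · intro t
    rw [(key t).deriv]
    have : 0 ≤ sqnorm (Upsilon (Rt t * M)) :=
      Finset.sum_nonneg fun i _ => sq_nonneg _
    nlinarith
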